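/- Let p be an odd prime and 𝒞 ≤ ℤ_p^α × ℤ_{p²}^β a ℤ_p ℤ_{p²}-additive code. Then 𝒟 = ⟨𝒞 ∪ { pP(w₁,w₂) : w₁,w₂ ∈ 𝒞 }⟩ is the smallest subgroup of ℤ_p^α × ℤ_{p²}^β containing 𝒞 whose Gray image is ℤ_p-linear: (i) Φ(𝒟) is linear, and (ii) any subgroup 𝒟' ⊇ 𝒞 with Φ(𝒟') linear contains 𝒟. -/
import Mathlib


/-- The Gray map `φ : ℤ_{p²} → ℤ_p^p`, sending `θ = θ₀·p + θ₁` (with digits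
`0 ≤ θ₀, θ₁ < p`) to the vector whose `i`-th coordinate is `θ₀ + θ₁·i`. -/
def gray (p : ℕ) (θ : ZMod (p ^ 2)) : Fin p → ZMod p :=
  fun i => ((θ.val / p : ℕ) : ZMod p) + ((θ.val % p : ℕ) : ZMod p) * (i.val : ZMod p)

/-- The carry function `P : ℤ_{p²} × ℤ_{p²} → {0,1}`: writing `u = a + p·c`,
`v = b + p·d` with digits in `{0,…,p-1}`, `P(u,v) = 1` iff `a + b ≥ p`. -/
def carry (p : ℕ) (u v : ZMod (p ^ 2)) : ℕ :=
  if p ≤ u.val % p + v.val % p then 1 else 0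

/-- The ambient group `ℤ_p^α × ℤ_{p²}^β` of a `ℤ_p ℤ_{p²}`-additive code. -/
abbrev Amb (p α β : ℕ) := (Fin α → ZMod p) × (Fin β → ZMod (p ^ 2))

/-- The vector `p·P(u,v) = (0, (p·P(u₂ⱼ, v₂ⱼ))ⱼ)` of carries. -/
def carryVec {p α β : ℕ} (u v : Amb p α β) : Amb p α β :=
  (0, fun j => ((p * carry p (u.2 j) (v.2 j) : ℕ) : ZMod (p ^ 2)))

/-- The carry vector on the `ℤ_{p²}`-block alone: `(p·P(uⱼ, vⱼ))ⱼ`. -/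
def carryY {p β : ℕ} (u v : Fin β → ZMod (p ^ 2)) : Fin β → ZMod (p ^ 2) :=
  fun j => ((p * carry p (u j) (v j) : ℕ) : ZMod (p ^ 2))

/-- The extended Gray map `Φ : ℤ_p^α × ℤ_{p²}^β → ℤ_p^{α+pβ}` (identity on the
first block, coordinatewise Gray map `φ` on the second block). -/
def grayExt {p α β : ℕ} (u : Amb p α β) : (Fin α ⊕ Fin β × Fin p) → ZMod p :=
  Sum.elim u.1 (fun x => gray p (u.2 x.1) x.2)

def gAux (p n : ℕ) : Fin p → ZMod p :=
  fun i => ((n / p : ℕ) : ZMod p) + ((n % p : ℕ) : ZMod p) * (i.val : ZMod p)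

lemma gAux_add_sq {p : ℕ} (hp : 0 < p) (n : ℕ) : gAux p (n + p ^ 2) = gAux p n := by
  funext i
  unfold gAux
  rw [pow_two, Nat.add_mul_div_left _ _ hp, Nat.add_mul_mod_self_left]
  push_cast
  simp

lemma gAux_mod {p : ℕ} (hp : 0 < p) (n : ℕ) : gAux p (n % p ^ 2) = gAux p n := by
  conv_rhs => rw [← Nat.mod_add_div n (p ^ 2)]
  generalize n / p ^ 2 = k
  induction k with
  | zero => simp
  | succ k ih => rw [Nat.mul_succ, ← add_assoc, gAux_add_sq hp, ih]

lemma gray_natCast {p : ℕ} (hp : 0 < p) [NeZero (p ^ 2)] (n : ℕ) :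
    gray p ((n : ℕ) : ZMod (p ^ 2)) = gAux p n := by
  have h : gray p ((n : ℕ) : ZMod (p ^ 2)) = gAux p (((n : ℕ) : ZMod (p ^ 2)).val) := rfl
  rw [h, ZMod.val_natCast, gAux_mod hp]

lemma gAux_key {p : ℕ} (hp : 0 < p) (a b c : ℕ)
    (hc : (p ≤ a % p + b % p ∧ c = 1) ∨ (a % p + b % p < p ∧ c = 0)) :
    gAux p (a + b - p * c) = gAux p a + gAux p b := by
  have hamod : a % p < p := Nat.mod_lt _ hp
  have hbmod : b % p < p := Nat.mod_lt _ hp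
  have hadiv : p * (a / p) + a % p = a := Nat.div_add_mod a p
  have hbdiv : p * (b / p) + b % p = b := Nat.div_add_mod b p
  have e1 : p * (a / p + b / p) = p * (a / p) + p * (b / p) := Nat.mul_add p _ _
  have hpc : p * c ≤ a % p + b % p := by rcases hc with ⟨h, rfl⟩ | ⟨h, rfl⟩ <;> omega
  have hrlt : a % p + b % p - p * c < p := by rcases hc with ⟨h, rfl⟩ | ⟨h, rfl⟩ <;> omega
  have hsplit : a + b - p * c = (a % p + b % p - p * c) + p * (a / p + b / p) := by
    rcases hc with ⟨h, rfl⟩ | ⟨h, rfl⟩ <;> omega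
  funext i
  show ((_ / p : ℕ) : ZMod p) + ((_ % p : ℕ) : ZMod p) * (i.val : ZMod p) = _
  rw [hsplit, Nat.add_mul_div_left _ _ hp, Nat.div_eq_of_lt hrlt, zero_add,
    Nat.add_mul_mod_self_left, Nat.mod_eq_of_lt hrlt, Nat.cast_sub hpc]
  show _ = ((a / p : ℕ) : ZMod p) + ((a % p : ℕ) : ZMod p) * (i.val : ZMod p)
      + (((b / p : ℕ) : ZMod p) + ((b % p : ℕ) : ZMod p) * (i.val : ZMod p))
  push_cast
  simp only [CharP.cast_eq_zero, zero_mul, sub_zero, mul_zero]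
  ring

lemma gray_add {p : ℕ} (hp : 0 < p) [NeZero (p ^ 2)] (u v : ZMod (p ^ 2)) :
    gray p (u + v - ((p * carry p u v : ℕ) : ZMod (p ^ 2))) = gray p u + gray p v := by
  have hc : (p ≤ u.val % p + v.val % p ∧ carry p u v = 1)
      ∨ (u.val % p + v.val % p < p ∧ carry p u v = 0) := by
    unfold carry
    split_ifs with h
    · exact Or.inl ⟨h, rfl⟩
    · exact Or.inr ⟨by omega, rfl⟩
  have hle : p * carry p u v ≤ u.val + v.val := by
    have h1 : u.val % p ≤ u.val := Nat.mod_le _ _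
    have h2 : v.val % p ≤ v.val := Nat.mod_le _ _
    rcases hc with ⟨h, heq⟩ | ⟨h, heq⟩ <;> rw [heq] <;> omega
  have hu : ((u.val : ℕ) : ZMod (p ^ 2)) = u := by simp [ZMod.natCast_val, ZMod.cast_id]
  have hv : ((v.val : ℕ) : ZMod (p ^ 2)) = v := by simp [ZMod.natCast_val, ZMod.cast_id]
  have key : u + v - ((p * carry p u v : ℕ) : ZMod (p ^ 2))
      = ((u.val + v.val - p * carry p u v : ℕ) : ZMod (p ^ 2)) := by
    rw [Nat.cast_sub hle]
    push_cast
    rw [hu, hv]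
  rw [key, gray_natCast hp, gAux_key hp _ _ _ hc]
  have g1 : gray p u = gAux p u.val := rfl
  have g2 : gray p v = gAux p v.val := rfl
  rw [g1, g2]

lemma gray_inj {p : ℕ} (h2 : 2 ≤ p) [NeZero p] [NeZero (p ^ 2)] {u v : ZMod (p ^ 2)}
    (h : gray p u = gray p v) : u = v := by
  have hp : 0 < p := by omega
  have hdivlt : ∀ w : ZMod (p ^ 2), w.val / p < p := by
    intro w
    have hlt : w.val < p * p := by rw [← pow_two]; exact ZMod.val_lt w
    exact Nat.div_lt_of_lt_mul hlt
  have h0 := congrFun h ⟨0, hp⟩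
  have h1 := congrFun h ⟨1, h2⟩
  unfold gray at h0 h1
  simp only [Nat.cast_zero, mul_zero, add_zero, Nat.cast_one, mul_one] at h0 h1
  have hd : u.val / p = v.val / p := by
    have := congrArg ZMod.val h0
    rwa [ZMod.val_cast_of_lt (hdivlt u), ZMod.val_cast_of_lt (hdivlt v)] at this
  have hm : ((u.val % p : ℕ) : ZMod p) = ((v.val % p : ℕ) : ZMod p) := by
    rw [hd] at h1
    exact add_left_cancel h1
  have hm' : u.val % p = v.val % p := by
    have := congrArg ZMod.val hm
    rwa [ZMod.val_cast_of_lt (Nat.mod_lt _ hp), ZMod.val_cast_of_lt (Nat.mod_lt _ hp)] at this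
  have hval : u.val = v.val := by
    have hu := Nat.div_add_mod u.val p
    have hv := Nat.div_add_mod v.val p
    have e : p * (u.val / p) = p * (v.val / p) := by rw [hd]
    omega
  have : ((u.val : ℕ) : ZMod (p ^ 2)) = ((v.val : ℕ) : ZMod (p ^ 2)) := by rw [hval]
  simpa [ZMod.natCast_val, ZMod.cast_id] using this

lemma gray_zero {p : ℕ} [NeZero (p ^ 2)] : gray p (0 : ZMod (p ^ 2)) = 0 := by
  funext i
  unfold gray
  simp [ZMod.val_zero]


lemma carry_congr {p : ℕ} {u v u' v' : ZMod (p ^ 2)} (h1 : u.val % p = u'.val % p)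
    (h2 : v.val % p = v'.val % p) : carry p u v = carry p u' v' := by
  unfold carry; rw [h1, h2]

lemma grayExt_sub_carry {p α β : ℕ} (hp : 0 < p) [NeZero (p ^ 2)] (u v : Amb p α β) :
    grayExt (u + v - carryVec u v) = grayExt u + grayExt v := by
  funext s
  cases s with
  | inl a =>
      show (u + v - carryVec u v).1 a = u.1 a + v.1 a
      simp [carryVec]
  | inr x =>
      show gray p ((u + v - carryVec u v).2 x.1) x.2
        = gray p (u.2 x.1) x.2 + gray p (v.2 x.1) x.2
      have h : (u + v - carryVec u v).2 x.1
          = u.2 x.1 + v.2 x.1 - ((p * carry p (u.2 x.1) (v.2 x.1) : ℕ) : ZMod (p ^ 2)) := rfl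
      rw [h]
      exact congrFun (gray_add hp (u.2 x.1) (v.2 x.1)) x.2

lemma grayExt_zero {p α β : ℕ} [NeZero (p ^ 2)] : grayExt (0 : Amb p α β) = 0 := by
  funext s
  cases s with
  | inl a => rfl
  | inr x =>
      show gray p ((0 : Amb p α β).2 x.1) x.2 = 0
      have h : ((0 : Amb p α β).2 x.1) = 0 := rfl
      rw [h, gray_zero]
      rfl

lemma grayExt_inj {p α β : ℕ} (h2 : 2 ≤ p) [NeZero p] [NeZero (p ^ 2)] {u v : Amb p α β}
    (h : grayExt u = grayExt v) : u = v := by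
  obtain ⟨u1, u2⟩ := u
  obtain ⟨v1, v2⟩ := v
  simp only [Prod.mk.injEq]
  constructor
  · funext a
    exact congrFun h (Sum.inl a)
  · funext j
    apply gray_inj h2 (u := u2 j) (v := v2 j)
    funext i
    exact congrFun h (Sum.inr (j, i))


/-- `𝒟 = ⟨𝒞 ∪ {pP(w₁,w₂)}⟩` is the smallest subgroup containing
`𝒞` with linear Gray image: (i) `Φ(𝒟)` is linear; (ii) every subgroup `𝒟' ⊇ 𝒞`
with linear Gray image contains `𝒟`. -/
theorem closure_minimal_linear (p α β : ℕ) (hp : p.Prime) (hodd : Odd p)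
    (C : AddSubgroup (Amb p α β)) :
    (∃ W : Submodule (ZMod p) ((Fin α ⊕ Fin β × Fin p) → ZMod p),
        (W : Set ((Fin α ⊕ Fin β × Fin p) → ZMod p))
          = grayExt '' (↑(AddSubgroup.closure ((C : Set (Amb p α β)) ∪
              {x : Amb p α β | ∃ w₁ ∈ C, ∃ w₂ ∈ C, x = carryVec w₁ w₂})) : Set (Amb p α β))) ∧
    ∀ D' : AddSubgroup (Amb p α β), (C : Set (Amb p α β)) ⊆ ↑D' →
      (∃ W : Submodule (ZMod p) ((Fin α ⊕ Fin β × Fin p) → ZMod p),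
        (W : Set ((Fin α ⊕ Fin β × Fin p) → ZMod p)) = grayExt '' (D' : Set (Amb p α β))) →
      AddSubgroup.closure ((C : Set (Amb p α β)) ∪
          {x : Amb p α β | ∃ w₁ ∈ C, ∃ w₂ ∈ C, x = carryVec w₁ w₂}) ≤ D' := by
  haveI : NeZero p := ⟨hp.pos.ne'⟩
  haveI : NeZero (p ^ 2) := ⟨pow_ne_zero 2 hp.pos.ne'⟩
  have hp0 : 0 < p := hp.pos
  have hp2 : 2 ≤ p := hp.two_le
  set G : Set (Amb p α β) := (C : Set (Amb p α β)) ∪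
      {x : Amb p α β | ∃ w₁ ∈ C, ∃ w₂ ∈ C, x = carryVec w₁ w₂} with hG
  set D : AddSubgroup (Amb p α β) := AddSubgroup.closure G with hD
  -- the reduction-mod-p map
  have hpdvd : p ∣ p ^ 2 := dvd_pow_self p two_ne_zero
  set φ : ZMod (p ^ 2) →+* ZMod p := ZMod.castHom hpdvd (ZMod p) with hφ
  have hφval : ∀ w : ZMod (p ^ 2), (φ w).val = w.val % p := by
    intro w
    have h1 : φ w = ((w.val : ℕ) : ZMod p) := by simp [hφ, ZMod.natCast_val]
    rw [h1, ZMod.val_natCast]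
  -- decomposition: every element of D agrees with an element of C mod p in the second block
  have decomp : ∀ x ∈ D, ∃ c ∈ C, ∀ j, ((x : Amb p α β).2 j).val % p
      = ((c : Amb p α β).2 j).val % p := by
    intro x hx
    have key : ∃ c ∈ C, ∀ j, φ ((x : Amb p α β).2 j) = φ ((c : Amb p α β).2 j) := by
      refine AddSubgroup.closure_induction ?_ ?_ ?_ ?_ hx
      · rintro y (hy | ⟨w₁, h₁, w₂, h₂, rfl⟩)
        · exact ⟨y, hy, fun j => rfl⟩
        · refine ⟨0, C.zero_mem, fun j => ?_⟩
          have h : (carryVec w₁ w₂).2 j = ((p * carry p (w₁.2 j) (w₂.2 j) : ℕ) : ZMod (p ^ 2)) := rfl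
          have h0 : ((0 : Amb p α β).2 j) = 0 := rfl
          rw [h, h0, map_zero, map_natCast, Nat.cast_mul]
          simp
      · exact ⟨0, C.zero_mem, fun j => rfl⟩
      · rintro y z - - ⟨c, hc, hcy⟩ ⟨d, hd, hdz⟩
        refine ⟨c + d, C.add_mem hc hd, fun j => ?_⟩
        have h1 : (y + z).2 j = y.2 j + z.2 j := rfl
        have h2 : ((c + d : Amb p α β)).2 j = c.2 j + d.2 j := rfl
        rw [h1, h2, map_add, map_add, hcy j, hdz j]
      · rintro y - ⟨c, hc, hcy⟩
        refine ⟨-c, C.neg_mem hc, fun j => ?_⟩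
        have h1 : (-y).2 j = -(y.2 j) := rfl
        have h2 : ((-c : Amb p α β)).2 j = -(c.2 j) := rfl
        rw [h1, h2, map_neg, map_neg, hcy j]
    obtain ⟨c, hc, hkey⟩ := key
    exact ⟨c, hc, fun j => by rw [← hφval, ← hφval, hkey j]⟩
  -- carries of elements of D lie in D
  have carry_mem : ∀ x ∈ D, ∀ y ∈ D, carryVec x y ∈ D := by
    intro x hx y hy
    obtain ⟨c, hc, hcx⟩ := decomp x hx
    obtain ⟨d, hd, hdy⟩ := decomp y hy
    have heq : carryVec x y = carryVec c d := by
      unfold carryVec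
      refine Prod.ext rfl ?_
      funext j
      exact congrArg (fun n => ((p * n : ℕ) : ZMod (p ^ 2))) (carry_congr (hcx j) (hdy j))
    rw [heq]
    exact AddSubgroup.subset_closure (Or.inr ⟨c, hc, d, hd, rfl⟩)
  -- the image is closed under addition
  set S : Set ((Fin α ⊕ Fin β × Fin p) → ZMod p) := grayExt '' (D : Set (Amb p α β)) with hS
  have hadd : ∀ x ∈ S, ∀ y ∈ S, x + y ∈ S := by
    rintro x ⟨u, hu, rfl⟩ y ⟨v, hv, rfl⟩
    refine ⟨u + v - carryVec u v, ?_, grayExt_sub_carry hp0 u v⟩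
    exact D.sub_mem (D.add_mem hu hv) (carry_mem u hu v hv)
  have hzero : (0 : (Fin α ⊕ Fin β × Fin p) → ZMod p) ∈ S :=
    ⟨0, D.zero_mem, grayExt_zero⟩
  have hnsmul : ∀ (n : ℕ) x, x ∈ S → n • x ∈ S := by
    intro n
    induction n with
    | zero => intro x _; simpa using hzero
    | succ n ih =>
        intro x hx
        rw [succ_nsmul]
        exact hadd _ (ih x hx) _ hx
  constructor
  · refine ⟨{ carrier := S,
              add_mem' := fun {x y} hx hy => hadd x hx y hy,
              zero_mem' := hzero,
              smul_mem' := ?_ }, rfl⟩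
    intro c x hx
    have h1 : c • x = c.val • x := by
      rw [← Nat.cast_smul_eq_nsmul (ZMod p) c.val x]
      congr 1
      simp [ZMod.natCast_val, ZMod.cast_id]
    rw [h1]
    exact hnsmul c.val x hx
  · rintro D' hsub ⟨W', hW'⟩
    rw [AddSubgroup.closure_le]
    rintro x (hx | ⟨w₁, h₁, w₂, h₂, rfl⟩)
    · exact hsub hx
    · have m1 : grayExt w₁ ∈ (W' : Set _) := by
        rw [hW']; exact ⟨w₁, hsub h₁, rfl⟩
      have m2 : grayExt w₂ ∈ (W' : Set _) := by
        rw [hW']; exact ⟨w₂, hsub h₂, rfl⟩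
      have msum : grayExt w₁ + grayExt w₂ ∈ (W' : Set _) := W'.add_mem m1 m2
      rw [hW'] at msum
      obtain ⟨z, hz, hze⟩ := msum
      rw [← grayExt_sub_carry hp0 w₁ w₂] at hze
      have hz' : z = w₁ + w₂ - carryVec w₁ w₂ := grayExt_inj hp2 hze
      have hcv : carryVec w₁ w₂ = w₁ + w₂ - z := by rw [hz']; abel
      rw [SetLike.mem_coe, hcv]
      exact D'.sub_mem (D'.add_mem (hsub h₁) (hsub h₂)) hz
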